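/- Let V be a finite type, E ⊆ V × V an edge relation, w : V × V → ℝ a weight function, and t ∈ V a fixed sink. Define the Bellman–Ford iterates d_k : V → ℝ ∪ {+∞} by d_0(t) = 0, d_0(u) = +∞ for u ≠ t, and d_{k+1}(u) = min(d_k(u), min_{(u,v) ∈ E} (w(u,v) + d_k(v))). Then for every k ≥ 0 and every vertex u, d_k(u) equals the infimum of the costs of walks from u to t that use at most k edges (equal to +∞ if no such walk exists). -/

import Mathlib

open scoped Classical

/-- Bellman–Ford iterates toward a sink `t`, valued in the extended reals:
`d 0 t = 0`, `d 0 u = +∞` for `u ≠ t`, and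
`d (k+1) u = min (d k u) (min over edges (u,v) of w(u,v) + d k v)`. -/
noncomputable def bellmanFord (V : Type*) (E : V → V → Prop)
    (w : V × V → ℝ) (t : V) : ℕ → V → EReal
  | 0, u => if u = t then 0 else ⊤
  | (k + 1), u =>
      min (bellmanFord V E w t k u)
        (⨅ (v : V) (_ : E u v), ((w (u, v) : EReal) + bellmanFord V E w t k v))

/-- The `k`-th Bellman–Ford iterate at `u` equals the infimum of the costs of
walks from `u` to `t` that use at most `k` edges (`+∞` if no such walk exists). -/
theorem bellmanFord_eq_sInf_walk_costs
    (V : Type*) [Fintype V] (E : V → V → Prop) (w : V × V → ℝ) (t : V) :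
    ∀ (k : ℕ) (u : V),
      bellmanFord V E w t k u =
        sInf {x : EReal | ∃ (m : ℕ) (v : ℕ → V), m ≤ k ∧ v 0 = u ∧ v m = t ∧
          (∀ i < m, E (v i) (v (i + 1))) ∧
          x = ((∑ i ∈ Finset.range m, w (v i, v (i + 1)) : ℝ) : EReal)} := by
  intro k
  induction k with
  | zero =>
    intro u
    by_cases hu : u = t
    · subst hu
      simp only [bellmanFord, if_pos rfl]
      have hset : {x : EReal | ∃ (m : ℕ) (v : ℕ → V), m ≤ 0 ∧ v 0 = u ∧ v m = u ∧
          (∀ i < m, E (v i) (v (i + 1))) ∧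
          x = ((∑ i ∈ Finset.range m, w (v i, v (i + 1)) : ℝ) : EReal)} = {0} := by
        ext x
        constructor
        · rintro ⟨m, v, hm, h0, ht', _, hx⟩
          interval_cases m
          simp [hx]
        · rintro rfl
          exact ⟨0, fun _ => u, le_refl 0, rfl, rfl, fun i hi => absurd hi (by omega),
            by simp⟩
      rw [hset, csInf_singleton]; simp
    · simp only [bellmanFord, if_neg hu]
      have hset : {x : EReal | ∃ (m : ℕ) (v : ℕ → V), m ≤ 0 ∧ v 0 = u ∧ v m = t ∧
          (∀ i < m, E (v i) (v (i + 1))) ∧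
          x = ((∑ i ∈ Finset.range m, w (v i, v (i + 1)) : ℝ) : EReal)} = ∅ := by
        ext x
        simp only [Set.mem_setOf_eq, Set.mem_empty_iff_false, iff_false]
        rintro ⟨m, v, hm, h0, ht', _, _⟩
        interval_cases m
        exact hu (h0 ▸ ht')
      rw [hset, sInf_empty]
  | succ k ih =>
    intro u
    apply le_antisymm
    · -- bellmanFord ≤ sInf
      apply le_sInf
      rintro x ⟨m, v, hm, h0, ht', he, hx⟩
      by_cases hmk : m ≤ k
      · refine le_trans (min_le_left _ _) ?_
        rw [ih u]
        exact sInf_le ⟨m, v, hmk, h0, ht', he, hx⟩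
      · have hm1 : m = k + 1 := by omega
        subst hm1
        refine le_trans (min_le_right _ _) ?_
        have hE0 : E u (v 1) := h0 ▸ he 0 (by omega)
        refine le_trans (iInf_le _ (v 1)) (le_trans (iInf_le _ hE0) ?_)
        have htail : bellmanFord V E w t k (v 1) ≤
            ((∑ i ∈ Finset.range k, w (v (i + 1), v (i + 2)) : ℝ) : EReal) := by
          rw [ih (v 1)]
          exact sInf_le ⟨k, fun i => v (i + 1), le_refl k, rfl, ht',
            fun i hi => he (i + 1) (by omega), rfl⟩
        calc (w (u, v 1) : EReal) + bellmanFord V E w t k (v 1)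
            ≤ (w (u, v 1) : EReal) +
              ((∑ i ∈ Finset.range k, w (v (i + 1), v (i + 2)) : ℝ) : EReal) :=
              add_le_add_right htail _
          _ = x := by
              rw [hx, Finset.sum_range_succ']
              rw [← EReal.coe_add, h0, add_comm]
    · -- sInf ≤ bellmanFord
      apply le_min
      · rw [ih u]
        apply sInf_le_sInf
        rintro x ⟨m, v, hm, h0, ht', he, hx⟩
        exact ⟨m, v, by omega, h0, ht', he, hx⟩
      · refine le_iInf fun v' => le_iInf fun hEv => ?_
        rw [ih v']
        -- reduce to: sInf ≤ w + x for every x in the walk-cost set of v'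
        have key : ∀ x ∈ {x : EReal | ∃ (m : ℕ) (p : ℕ → V), m ≤ k ∧ p 0 = v' ∧ p m = t ∧
            (∀ i < m, E (p i) (p (i + 1))) ∧
            x = ((∑ i ∈ Finset.range m, w (p i, p (i + 1)) : ℝ) : EReal)},
            sInf {x : EReal | ∃ (m : ℕ) (v : ℕ → V), m ≤ k + 1 ∧ v 0 = u ∧ v m = t ∧
              (∀ i < m, E (v i) (v (i + 1))) ∧
              x = ((∑ i ∈ Finset.range m, w (v i, v (i + 1)) : ℝ) : EReal)} ≤
            (w (u, v') : EReal) + x := by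
          rintro x ⟨m, p, hm, h0, ht', he, hx⟩
          set q : ℕ → V := fun i => match i with | 0 => u | (j + 1) => p j with hq
          refine sInf_le ⟨m + 1, q, by omega, rfl, ht', ?_, ?_⟩
          · intro i hi
            match i with
            | 0 => simpa [hq, h0] using hEv
            | (j + 1) => exact he j (by omega)
          · rw [hx, Finset.sum_range_succ']
            have : q 0 = u := rfl
            rw [← EReal.coe_add, add_comm]
            congr 1
            simp [hq, h0]
        set a := sInf {x : EReal | ∃ (m : ℕ) (v : ℕ → V), m ≤ k + 1 ∧ v 0 = u ∧ v m = t ∧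
          (∀ i < m, E (v i) (v (i + 1))) ∧
          x = ((∑ i ∈ Finset.range m, w (v i, v (i + 1)) : ℝ) : EReal)} with ha
        have h1 : a - (w (u, v') : EReal) ≤ sInf {x : EReal | ∃ (m : ℕ) (p : ℕ → V),
            m ≤ k ∧ p 0 = v' ∧ p m = t ∧ (∀ i < m, E (p i) (p (i + 1))) ∧
            x = ((∑ i ∈ Finset.range m, w (p i, p (i + 1)) : ℝ) : EReal)} :=
          le_sInf fun x hx => EReal.sub_le_of_le_add' (key x hx)
        rw [add_comm]
        exact (EReal.sub_le_iff_le_add (Or.inl (EReal.coe_ne_bot _))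
          (Or.inl (EReal.coe_ne_top _))).mp h1
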